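/- Let W be a finite Weyl group with simple reflections S and let w ∈ W. If the fixed subspace Fix(w) = Ker(w − Id) of w acting on ℝⁿ is {0}, then for the Coxeter group element w the parabolic closure of w is all of W; in particular, the conjugacy class of w meets no proper standard parabolic subgroup W_J (J ⊊ S), i.e., w is cuspidal. -/

import Mathlib

open scoped RealInnerProductSpace

abbrev V (n : ℕ) : Type := EuclideanSpace ℝ (Fin n)

/-- `g` is the (orthogonal) reflection corresponding to the root `β`. -/
def IsReflAlong {n : ℕ} (β : V n) (g : V n ≃ₗ[ℝ] V n) : Prop :=
  ∀ v, g v = v - (2 * ⟪v, β⟫ / ⟪β, β⟫) • β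

/-- `Φ` is a finite crystallographic root system spanning `ℝⁿ`. -/
structure IsCrystalRootSystem {n : ℕ} (Φ : Set (V n)) : Prop where
  finite : Φ.Finite
  ne_zero : ∀ β ∈ Φ, β ≠ 0
  spans : Submodule.span ℝ Φ = ⊤
  refl_mem : ∀ α ∈ Φ, ∀ β ∈ Φ, β - (2 * ⟪β, α⟫ / ⟪α, α⟫) • α ∈ Φ
  crystal : ∀ α ∈ Φ, ∀ β ∈ Φ, ∃ z : ℤ, (2 * ⟪β, α⟫ / ⟪α, α⟫) = (z : ℝ)

/-- The reflection length of `w`: the least `k` such that `w` is a product of `k`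
reflections of the root system `Φ`. -/
noncomputable def reflLen {n : ℕ} (Φ : Set (V n)) (w : V n ≃ₗ[ℝ] V n) : ℕ :=
  sInf {k | ∃ l : List (V n ≃ₗ[ℝ] V n), l.length = k ∧
    (∀ g ∈ l, ∃ β ∈ Φ, IsReflAlong β g) ∧ l.prod = w}

/-- The Weyl group of `Φ`: the group generated by the reflections of `Φ`. -/
noncomputable def weylGroup {n : ℕ} (Φ : Set (V n)) : Subgroup (V n ≃ₗ[ℝ] V n) :=
  Subgroup.closure {g | ∃ β ∈ Φ, IsReflAlong β g}

/-- The coroot `β^∨ = 2β/(β,β)` of a root `β`. -/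
noncomputable def coroot {n : ℕ} (β : V n) : V n := (2 / ⟪β, β⟫) • β

/-- The coroot lattice: the `ℤ`-span of the coroots. -/
noncomputable def corootLattice {n : ℕ} (Φ : Set (V n)) : Submodule ℤ (V n) :=
  Submodule.span ℤ (coroot '' Φ)

/-- The move-set `Mov(w) = Im(w - Id)`. -/
noncomputable def movSet {n : ℕ} (w : V n ≃ₗ[ℝ] V n) : Submodule ℝ (V n) :=
  LinearMap.range (w.toLinearMap - LinearMap.id)

/-- The mod-set `Mod(w) = (w - Id)R^∨`. -/
noncomputable def modSet {n : ℕ} (Φ : Set (V n)) (w : V n ≃ₗ[ℝ] V n) : Submodule ℤ (V n) :=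
  Submodule.map ((w.toLinearMap - LinearMap.id).restrictScalars ℤ) (corootLattice Φ)

/-- If `w` lies in the Weyl group `W` (generated by the simple reflections
`s i` along a linearly independent system of simple roots `Δ i ∈ Φ`) and the fixed
subspace `Fix(w) = Ker(w − Id)` is trivial, then the parabolic closure of `w` is all of
`W`: no conjugate of `w` lies in a proper standard parabolic subgroup `W_J` (`J ⊊ S`),
i.e. `w` is cuspidal. -/
theorem cuspidal_of_fix_trivial {n : ℕ} (Φ : Set (V n)) (hΦ : IsCrystalRootSystem Φ)
    (Δ : Fin n → V n) (hΔΦ : ∀ i, Δ i ∈ Φ) (hΔind : LinearIndependent ℝ Δ)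
    (s : Fin n → (V n ≃ₗ[ℝ] V n)) (hs : ∀ i, IsReflAlong (Δ i) (s i))
    (hgen : weylGroup Φ = Subgroup.closure (Set.range s))
    (w : V n ≃ₗ[ℝ] V n) (hw : w ∈ weylGroup Φ)
    (hfix : LinearMap.ker (w.toLinearMap - LinearMap.id) = ⊥) :
    ∀ J : Set (Fin n), J ≠ Set.univ →
      ∀ u ∈ weylGroup Φ, u * w * u⁻¹ ∉ Subgroup.closure (s '' J) := by
  intro J hJ u hu hmem
  obtain ⟨i, hi⟩ : ∃ i, i ∉ J := by
    by_contra h; push_neg at h; exact hJ (Set.eq_univ_of_forall h)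
  set K : Submodule ℝ (V n) := Submodule.span ℝ (Δ '' J) with hK
  have hKne : K ≠ ⊤ := by
    intro h
    apply hΔind.notMem_span_image hi
    rw [← hK, h]
    exact Submodule.mem_top
  have hbot : Kᗮ ≠ ⊥ := by
    intro h
    exact hKne (Submodule.orthogonal_eq_bot_iff.mp h)
  obtain ⟨v, hvK, hv0⟩ := Submodule.exists_mem_ne_zero_of_ne_bot hbot
  have hfixv : ∀ g ∈ Subgroup.closure (s '' J), g v = v := by
    intro g hg
    induction hg using Subgroup.closure_induction with
    | mem g hgmem =>
      obtain ⟨j, hjJ, rfl⟩ := hgmem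
      rw [hs j v]
      have hz : ⟪v, Δ j⟫ = 0 := by
        rw [real_inner_comm]
        exact hvK (Δ j) (Submodule.subset_span ⟨j, hjJ, rfl⟩)
      simp [hz]
    | one => rfl
    | mul a b ha hb iha ihb =>
      show a (b v) = v
      rw [ihb, iha]
    | inv a ha ih =>
      have h1 : a (a⁻¹ v) = v := by
        have h2 : (a * a⁻¹) v = v := by rw [mul_inv_cancel]; rfl
        exact h2
      exact a.injective (h1.trans ih.symm)
  have hv : u (w (u⁻¹ v)) = v := hfixv _ hmem
  have huu : u (u⁻¹ v) = v := by
    have h2 : (u * u⁻¹) v = v := by rw [mul_inv_cancel]; rfl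
    exact h2
  have hwv : w (u⁻¹ v) = u⁻¹ v := u.injective (hv.trans huu.symm)
  have hker : u⁻¹ v ∈ LinearMap.ker (w.toLinearMap - LinearMap.id) := by
    simpa [LinearMap.sub_apply] using sub_eq_zero.mpr hwv
  rw [hfix] at hker
  apply hv0
  have := congrArg (⇑u) (Submodule.mem_bot ℝ |>.mp hker)
  simpa using this
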